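/- arXiv:1208.6059 — 5 statements merged into one kernel-verified Lean document; each statement's English description precedes it below -/
import Mathlib

section
/- Let T be a measure-preserving transformation of a probability space (Ω, μ) and B a measurable set with μ(B) > 0. Define F_B(t) = μ({x : τ_B(x) > t/μ(B)}). Then for all t, s > 0, |F_B(t) − F_B(s)| ≤ |t − s| + μ(B). -/
open MeasureTheory Set Function ENNReal

/-- First entry time to `B` under `T` (`⊤` if the orbit never enters `B`). -/
noncomputable def tauE {Ω : Type*} (T : Ω → Ω) (B : Set Ω) (x : Ω) : ℕ∞ :=
  sInf ((fun j : ℕ => (j : ℕ∞)) '' {j : ℕ | 0 < j ∧ T^[j] x ∈ B})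

/-- The induced (first return) map on `U`. -/
noncomputable def indMap {Ω : Type*} (T : Ω → Ω) (U : Set Ω) (x : Ω) : Ω :=
  T^[(tauE T U x).toNat] x

theorem stmt2 {Ω : Type*} [MeasurableSpace Ω] (μ : Measure Ω) [IsProbabilityMeasure μ]
    (T : Ω → Ω) (hT : MeasurePreserving T μ μ) (B : Set Ω) (hB : MeasurableSet B)
    (hBpos : 0 < μ B)
    (F : ℝ → ℝ)
    (hF : ∀ t : ℝ, F t =
      (μ {x | ∀ j : ℕ, 1 ≤ j → (j : ℝ) ≤ t / (μ B).toReal → T^[j] x ∉ B}).toReal)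
    (t s : ℝ) (ht : 0 < t) (hs : 0 < s) :
    |F t - F s| ≤ |t - s| + (μ B).toReal := by
  wlog hle : s ≤ t generalizing s t with H
  · rw [abs_sub_comm (F t), abs_sub_comm t]
    exact H s t hs ht (le_of_not_ge hle)
  set a := (μ B).toReal with ha_def
  have ha : 0 < a := ENNReal.toReal_pos hBpos.ne' (measure_ne_top μ B)
  set A : ℝ → Set Ω := fun r => {x | ∀ j : ℕ, 1 ≤ j → (j : ℝ) ≤ r / a → T^[j] x ∉ B}
    with hA
  have hAmeas : ∀ r, MeasurableSet (A r) := by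
    intro r
    have : A r = ⋂ (j : ℕ) (_ : 1 ≤ j) (_ : (j : ℝ) ≤ r / a), (T^[j]) ⁻¹' Bᶜ := by
      ext x; simp [A, Set.mem_iInter, Set.mem_preimage]
    rw [this]
    exact MeasurableSet.iInter fun j => MeasurableSet.iInter fun _ =>
      MeasurableSet.iInter fun _ => (hT.measurable.iterate j) hB.compl
  have hdiv : s / a ≤ t / a := by gcongr
  have hsub : A t ⊆ A s := fun x hx j hj1 hj2 => hx j hj1 (hj2.trans hdiv)
  -- the difference set is covered by finitely many preimages of B
  set J : Finset ℕ := Finset.Ioc ⌊s / a⌋₊ ⌊t / a⌋₊ with hJ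
  have hcover : A s \ A t ⊆ ⋃ j ∈ J, (T^[j]) ⁻¹' B := by
    rintro x ⟨hxs, hxt⟩
    simp only [A, Set.mem_setOf_eq, not_forall] at hxt
    obtain ⟨j, hj1, hj2, hj3⟩ := hxt
    simp only [not_not] at hj3
    refine Set.mem_iUnion₂.mpr ⟨j, ?_, hj3⟩
    rw [hJ, Finset.mem_Ioc]
    refine ⟨?_, Nat.le_floor hj2⟩
    by_contra hc
    push_neg at hc
    have : (j : ℝ) ≤ s / a := le_trans (by exact_mod_cast hc) (Nat.floor_le (by positivity))
    exact hxs j hj1 this hj3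
  have hmeascover : μ (A s \ A t) ≤ (J.card : ℝ≥0∞) * μ B := by
    calc μ (A s \ A t) ≤ μ (⋃ j ∈ J, (T^[j]) ⁻¹' B) := measure_mono hcover
    _ ≤ ∑ j ∈ J, μ ((T^[j]) ⁻¹' B) := measure_biUnion_finset_le J _
    _ = ∑ _j ∈ J, μ B := by
        refine Finset.sum_congr rfl fun j _ => ?_
        exact (hT.iterate j).measure_preimage hB.nullMeasurableSet
    _ = (J.card : ℝ≥0∞) * μ B := by rw [Finset.sum_const, nsmul_eq_mul]
  have hcard : (J.card : ℝ) ≤ (t - s) / a + 1 := by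
    have h1 : J.card = ⌊t / a⌋₊ - ⌊s / a⌋₊ := Nat.card_Ioc _ _
    have hmono : ⌊s / a⌋₊ ≤ ⌊t / a⌋₊ := Nat.floor_mono hdiv
    have h2 : (J.card : ℝ) = (⌊t / a⌋₊ : ℝ) - (⌊s / a⌋₊ : ℝ) := by
      rw [h1, Nat.cast_sub hmono]
    have h3 : (⌊t / a⌋₊ : ℝ) ≤ t / a := Nat.floor_le (by positivity)
    have h4 : s / a - 1 < (⌊s / a⌋₊ : ℝ) := Nat.sub_one_lt_floor _
    rw [h2, sub_div]
    linarith
  -- convert the measure bound to reals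
  have hfin : μ (A s \ A t) ≠ ⊤ := (measure_lt_top μ _).ne
  have hreal : (μ (A s \ A t)).toReal ≤ (t - s) + a := by
    have := ENNReal.toReal_mono (by finiteness) hmeascover
    rw [ENNReal.toReal_mul, ENNReal.toReal_natCast] at this
    calc (μ (A s \ A t)).toReal ≤ (J.card : ℝ) * a := this
    _ ≤ ((t - s) / a + 1) * a := by
        apply mul_le_mul_of_nonneg_right hcard ha.le
    _ = (t - s) + a := by field_simp
  -- combine
  have hFt : F t = (μ (A t)).toReal := hF t
  have hFs : F s = (μ (A s)).toReal := hF s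
  have hmono' : F t ≤ F s :=
    hFt ▸ hFs ▸ ENNReal.toReal_mono (measure_ne_top μ _) (measure_mono hsub)
  have hsplit : μ (A s) ≤ μ (A t) + μ (A s \ A t) := by
    calc μ (A s) = μ (A t ∪ A s \ A t) := by rw [Set.union_diff_cancel hsub]
    _ ≤ μ (A t) + μ (A s \ A t) := measure_union_le _ _
  have hsplit' : F s ≤ F t + (μ (A s \ A t)).toReal := by
    rw [hFs, hFt, ← ENNReal.toReal_add (measure_ne_top μ _) hfin]
    exact ENNReal.toReal_mono (by finiteness) hsplit
  rw [abs_of_nonpos (by linarith), abs_of_nonneg (by linarith)]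
  linarith
end

section
/- Let T be a measure-preserving map of a probability space (Ω, μ), U ⊆ Ω with μ(U) > 0, B ⊆ U, and s ≥ 1 an integer. For k ≥ 1 let U_k = {x ∈ U : τ_U(x) = k} and B_{k,j} = U_k ∩ T^{−j}{τ_B = s} for 0 ≤ j ≤ k−1. Then the sets B_{k,j}, over all k ≥ 1 and 0 ≤ j < k, are pairwise disjoint, and Σ_{k,j} μ(B_{k,j}) ≤ μ(B). -/
open MeasureTheory Set Function ENNReal

lemma tauE_eq_coe_iff {Ω : Type*} (T : Ω → Ω) (C : Set Ω) (x : Ω) (n : ℕ) :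
    tauE T C x = (n : ℕ∞) ↔ 0 < n ∧ T^[n] x ∈ C ∧ ∀ i, 0 < i → T^[i] x ∈ C → n ≤ i := by
  unfold tauE
  set S := {j : ℕ | 0 < j ∧ T^[j] x ∈ C} with hS
  constructor
  · intro h
    have hne : S.Nonempty := by
      by_contra hemp
      rw [not_nonempty_iff_eq_empty] at hemp
      rw [hemp, image_empty, sInf_empty] at h
      simp at h
    have hm : sInf ((fun j : ℕ => (j : ℕ∞)) '' S) = ((sInf S : ℕ) : ℕ∞) := by
      apply le_antisymm
      · exact sInf_le ⟨sInf S, Nat.sInf_mem hne, rfl⟩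
      · apply le_sInf
        rintro b ⟨i, hi, rfl⟩
        show ((sInf S : ℕ) : ℕ∞) ≤ (i : ℕ∞)
        exact_mod_cast Nat.sInf_le hi
    have hmn : sInf S = n := by exact_mod_cast hm.symm.trans h
    obtain ⟨h1, h2⟩ := Nat.sInf_mem hne
    rw [hmn] at h1 h2
    exact ⟨h1, h2, fun i hi1 hi2 => hmn ▸ Nat.sInf_le ⟨hi1, hi2⟩⟩
  · rintro ⟨hn, hmem, hlb⟩
    apply le_antisymm
    · exact sInf_le ⟨n, ⟨hn, hmem⟩, rfl⟩
    · apply le_sInf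
      rintro b ⟨i, ⟨hi1, hi2⟩, rfl⟩
      show (n : ℕ∞) ≤ (i : ℕ∞)
      exact_mod_cast hlb i hi1 hi2

lemma measurableSet_tauE_eq {Ω : Type*} [MeasurableSpace Ω] {T : Ω → Ω}
    (hT : Measurable T) {C : Set Ω} (hC : MeasurableSet C) (n : ℕ) :
    MeasurableSet {x | tauE T C x = (n : ℕ∞)} := by
  have heq : {x | tauE T C x = (n : ℕ∞)} =
      ({x : Ω | 0 < n} ∩ (T^[n] ⁻¹' C)) ∩ ⋂ i ∈ Finset.Ico 1 n, (T^[i] ⁻¹' C)ᶜ := by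
    ext x
    simp only [tauE_eq_coe_iff, mem_inter_iff, mem_setOf_eq, mem_preimage, mem_iInter,
      Finset.mem_Ico, mem_compl_iff]
    constructor
    · rintro ⟨h1, h2, h3⟩
      exact ⟨⟨h1, h2⟩, fun i hi hmem => absurd (h3 i hi.1 hmem) (not_le.mpr hi.2)⟩
    · rintro ⟨⟨h1, h2⟩, h3⟩
      refine ⟨h1, h2, fun i hi1 hi2 => ?_⟩
      by_contra hlt
      exact h3 i ⟨hi1, not_le.mp hlt⟩ hi2
  rw [heq]
  refine (MeasurableSet.inter ?_ ((hT.iterate n) hC)).inter ?_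
  · exact MeasurableSet.const _
  · exact MeasurableSet.biInter (Finset.Ico 1 n).countable_toSet
      (fun i _ => ((hT.iterate i) hC).compl)

theorem stmt7 {Ω : Type*} [MeasurableSpace Ω] (μ : Measure Ω) [IsProbabilityMeasure μ]
    (T : Ω → Ω) (hT : MeasurePreserving T μ μ)
    (U : Set Ω) (hU : MeasurableSet U) (hUpos : 0 < μ U)
    (B : Set Ω) (hB : MeasurableSet B) (hBU : B ⊆ U)
    (s : ℕ) (hs : 1 ≤ s)
    (Bkj : ℕ → ℕ → Set Ω)
    (hBkj : ∀ k j : ℕ, Bkj k j =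
      {x ∈ U | tauE T U x = (k : ℕ∞)} ∩ T^[j] ⁻¹' {x | tauE T B x = (s : ℕ∞)}) :
    (∀ k k' j j' : ℕ, 1 ≤ k → j < k → 1 ≤ k' → j' < k' → (k, j) ≠ (k', j') →
        Disjoint (Bkj k j) (Bkj k' j')) ∧
      ∑' k : ℕ, ∑' j : ℕ, (if j < k then μ (Bkj k j) else 0) ≤ μ B := by
  have hTm : Measurable T := hT.measurable
  set A : Set Ω := {x | tauE T B x = (s : ℕ∞)} with hA_def
  have hA : MeasurableSet A := measurableSet_tauE_eq hTm hB s
  have hAsub : A ⊆ T^[s] ⁻¹' B := fun x hx => ((tauE_eq_coe_iff T B x s).mp hx).2.1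
  have hAB : μ A ≤ μ B := by
    calc μ A ≤ μ (T^[s] ⁻¹' B) := measure_mono hAsub
      _ = μ B := (hT.iterate s).measure_preimage hB.nullMeasurableSet
  have hBkjm : ∀ k j, MeasurableSet (Bkj k j) := by
    intro k j
    rw [hBkj]
    have h1 : {x ∈ U | tauE T U x = (k : ℕ∞)} = U ∩ {x | tauE T U x = (k : ℕ∞)} := rfl
    rw [h1]
    exact (hU.inter (measurableSet_tauE_eq hTm hU k)).inter
      ((hTm.iterate j) (measurableSet_tauE_eq hTm hB s))
  -- key contradiction for same k, distinct j < j'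
  have key : ∀ k j j' x, j < j' → j' < k → x ∈ Bkj k j → x ∈ Bkj k j' → False := by
    intro k j j' x hjj' hj'k hx hx'
    rw [hBkj] at hx hx'
    obtain ⟨⟨hxU, hxk⟩, hxj⟩ := hx
    obtain ⟨_, hxj'⟩ := hx'
    rw [tauE_eq_coe_iff] at hxk
    have hBj := (tauE_eq_coe_iff T B _ s).mp hxj
    have hBj' := (tauE_eq_coe_iff T B _ s).mp hxj'
    have h1 : T^[s + j] x ∈ B := by
      have := hBj.2.1
      rwa [← Function.iterate_add_apply] at this
    have h2 : k ≤ s + j := hxk.2.2 (s + j) (by omega) (hBU h1)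
    have h3 : T^[s + j - j'] (T^[j'] x) ∈ B := by
      rw [← Function.iterate_add_apply]
      have he : s + j - j' + j' = s + j := by omega
      rw [he]; exact h1
    have h4 := hBj'.2.2 (s + j - j') (by omega) h3
    omega
  have disjk : ∀ j j' k k', k ≠ k' → Disjoint (Bkj k j) (Bkj k' j') := by
    intro j j' k k' hne
    rw [Set.disjoint_left]
    intro x hx hx'
    rw [hBkj] at hx hx'
    have : (k : ℕ∞) = (k' : ℕ∞) := hx.1.2.symm.trans hx'.1.2
    exact hne (by exact_mod_cast this)
  have part1 : ∀ k k' j j' : ℕ, 1 ≤ k → j < k → 1 ≤ k' → j' < k' → (k, j) ≠ (k', j') →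
      Disjoint (Bkj k j) (Bkj k' j') := by
    intro k k' j j' hk hjk hk' hj'k' hne
    rcases eq_or_ne k k' with rfl | hkk'
    · have hjj' : j ≠ j' := by
        intro h; exact hne (by rw [h])
      rw [Set.disjoint_left]
      intro x hx hx'
      rcases hjj'.lt_or_gt with h | h
      · exact key k j j' x h hj'k' hx hx'
      · exact key k j' j x h hjk hx' hx
    · exact disjk j j' k k' hkk'
  refine ⟨part1, ?_⟩
  -- V j = points of U that do not return to U within the first j steps
  set V : ℕ → Set Ω := fun j => U ∩ ⋂ i ∈ Finset.Icc 1 j, (T^[i] ⁻¹' U)ᶜ with hV_def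
  have hVm : ∀ j, MeasurableSet (V j) := by
    intro j
    exact hU.inter (MeasurableSet.biInter (Finset.Icc 1 j).countable_toSet
      (fun i _ => ((hTm.iterate i) hU).compl))
  have hVmem : ∀ j x, x ∈ V j ↔ x ∈ U ∧ ∀ i, 1 ≤ i → i ≤ j → T^[i] x ∉ U := by
    intro j x
    simp [hV_def, mem_iInter, and_imp]
  have hBkjV : ∀ k j, j < k → Bkj k j ⊆ V j ∩ T^[j] ⁻¹' A := by
    intro k j hjk x hx
    rw [hBkj] at hx
    obtain ⟨⟨hxU, hxk⟩, hxj⟩ := hx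
    rw [tauE_eq_coe_iff] at hxk
    refine ⟨(hVmem j x).mpr ⟨hxU, fun i hi1 hi2 hmem => ?_⟩, hxj⟩
    have := hxk.2.2 i (by omega) hmem
    omega
  have inner : ∀ j, (∑' k, if j < k then μ (Bkj k j) else 0) ≤ μ (V j ∩ T^[j] ⁻¹' A) := by
    intro j
    refine Summable.tsum_le_of_sum_le ENNReal.summable (fun t => ?_)
    rw [← Finset.sum_filter]
    have hdisj : (↑(t.filter (fun k => j < k)) : Set ℕ).PairwiseDisjoint (fun k => Bkj k j) :=
      fun k _ k' _ hkk' => disjk j j k k' hkk'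
    rw [← measure_biUnion_finset hdisj (fun k _ => hBkjm k j)]
    apply measure_mono
    apply Set.iUnion₂_subset
    intro k hk
    exact hBkjV k j (by simpa using (Finset.mem_filter.mp hk).2)
  have outer : ∀ t : Finset ℕ, (∑ j ∈ t, μ (V j ∩ T^[j] ⁻¹' A)) ≤ μ A := by
    intro t
    set n := t.sup id with hn_def
    have hle : ∀ j ∈ t, j ≤ n := fun j hj => Finset.le_sup (f := id) hj
    set D : ℕ → Set Ω := fun j => T^[n - j] ⁻¹' (V j ∩ T^[j] ⁻¹' A) with hD_def
    have hDm : ∀ j, MeasurableSet (D j) :=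
      fun j => (hTm.iterate (n - j)) ((hVm j).inter ((hTm.iterate j) hA))
    have hDeq : ∀ j ∈ t, μ (V j ∩ T^[j] ⁻¹' A) = μ (D j) := by
      intro j _
      exact ((hT.iterate (n - j)).measure_preimage
        ((hVm j).inter ((hTm.iterate j) hA)).nullMeasurableSet).symm
    rw [Finset.sum_congr rfl hDeq]
    have hDkey : ∀ j j', j ∈ t → j' ∈ t → j < j' → ∀ x, x ∈ D j → x ∈ D j' → False := by
      intro j j' hj hj' h x hx hx'
      have hy : T^[n - j'] x ∈ V j' := hx'.1
      have hz : T^[n - j] x ∈ V j := hx.1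
      have hzU : T^[n - j] x ∈ U := ((hVmem j _).mp hz).1
      have heq : T^[n - j] x = T^[j' - j] (T^[n - j'] x) := by
        rw [← Function.iterate_add_apply]
        congr 1
        have := hle j hj
        have := hle j' hj'
        omega
      have hcon := ((hVmem j' _).mp hy).2 (j' - j) (by omega) (by omega)
      rw [← heq] at hcon
      exact hcon hzU
    have hDdisj : (↑t : Set ℕ).PairwiseDisjoint D := by
      intro j hj j' hj' hjj'
      have hjt : j ∈ t := hj
      have hj't : j' ∈ t := hj'
      refine Set.disjoint_left.mpr fun x hx hx' => ?_
      rcases hjj'.lt_or_gt with h | h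
      · exact hDkey j j' hjt hj't h x hx hx'
      · exact hDkey j' j hj't hjt h x hx' hx
    rw [← measure_biUnion_finset hDdisj (fun j _ => hDm j)]
    calc μ (⋃ j ∈ t, D j) ≤ μ (T^[n] ⁻¹' A) := by
          apply measure_mono
          apply Set.iUnion₂_subset
          intro j hj x hx
          have hx2 : T^[j] (T^[n - j] x) ∈ A := hx.2
          rw [← Function.iterate_add_apply] at hx2
          have he : j + (n - j) = n := by have := hle j hj; omega
          rwa [he] at hx2
      _ = μ A := (hT.iterate n).measure_preimage hA.nullMeasurableSet
  calc ∑' k : ℕ, ∑' j : ℕ, (if j < k then μ (Bkj k j) else 0)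
      = ∑' j : ℕ, ∑' k : ℕ, (if j < k then μ (Bkj k j) else 0) := ENNReal.tsum_comm
    _ ≤ ∑' j : ℕ, μ (V j ∩ T^[j] ⁻¹' A) := ENNReal.tsum_le_tsum inner
    _ ≤ μ A := Summable.tsum_le_of_sum_le ENNReal.summable outer
    _ ≤ μ B := hAB
end

section
/- Suppose for a sequence of sets B_j with μ(B_j) → 0 the limiting entry times distribution F and return times distribution F̃ both exist and satisfy F(t) = ∫_t^∞ F̃(s) ds. If F = F̃ as functions on (0,∞), then F(t) = e^{−t} for all t > 0. -/
open MeasureTheory Set Function ENNReal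

theorem stmt11 {Ω : Type*} [MeasurableSpace Ω] (μ : Measure Ω) [IsProbabilityMeasure μ]
    (T : Ω → Ω) (hT : MeasurePreserving T μ μ) (hTerg : Ergodic T μ)
    (B : ℕ → Set Ω) (hBmeas : ∀ j, MeasurableSet (B j)) (hBpos : ∀ j, 0 < μ (B j))
    (hB0 : Filter.Tendsto (fun j => μ (B j)) Filter.atTop (nhds 0))
    (F Ft : ℝ → ℝ)
    (hF : ∀ t : ℝ, 0 < t → Filter.Tendsto (fun j =>
      (μ {x | ∀ n : ℕ, 1 ≤ n → (n : ℝ) ≤ t / (μ (B j)).toReal → T^[n] x ∉ B j}).toReal)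
      Filter.atTop (nhds (F t)))
    (hFt : ∀ t : ℝ, 0 < t → Filter.Tendsto (fun j =>
      (μ (B j ∩ {x | ∀ n : ℕ, 1 ≤ n → (n : ℝ) ≤ t / (μ (B j)).toReal →
        T^[n] x ∉ B j})).toReal / (μ (B j)).toReal)
      Filter.atTop (nhds (Ft t)))
    (hInt : ∀ t : ℝ, 0 < t → F t = ∫ s in Set.Ioi t, Ft s)
    (hEq : ∀ t : ℝ, 0 < t → F t = Ft t) :
    ∀ t : ℝ, 0 < t → F t = Real.exp (-t) := by
  -- the sets whose measures converge to `F t`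
  set S : ℕ → ℝ → Set Ω := fun j t =>
    {x | ∀ n : ℕ, 1 ≤ n → (n : ℝ) ≤ t / (μ (B j)).toReal → T^[n] x ∉ B j} with hS
  have hm : ∀ j, 0 < (μ (B j)).toReal := fun j =>
    ENNReal.toReal_pos (hBpos j).ne' (measure_ne_top μ _)
  -- upper bound : F t ≤ 1
  have hub : ∀ t : ℝ, 0 < t → F t ≤ 1 := by
    intro t ht
    refine le_of_tendsto (hF t ht) (Filter.Eventually.of_forall fun j => ?_)
    calc (μ (S j t)).toReal ≤ (1 : ℝ≥0∞).toReal :=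
          ENNReal.toReal_mono one_ne_top prob_le_one
      _ = 1 := by simp
  -- nonnegativity
  have hnn : ∀ t : ℝ, 0 < t → 0 ≤ F t := fun t ht =>
    ge_of_tendsto (hF t ht) (Filter.Eventually.of_forall fun j => ENNReal.toReal_nonneg)
  -- lower bound : 1 - t ≤ F t  (union bound)
  have hlb : ∀ t : ℝ, 0 < t → 1 - t ≤ F t := by
    intro t ht
    refine ge_of_tendsto (hF t ht) (Filter.Eventually.of_forall fun j => ?_)
    set m : ℝ := (μ (B j)).toReal with hmdef
    set N : ℕ := ⌊t / m⌋₊ with hN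
    set U : Set Ω := ⋃ n ∈ Finset.Icc 1 N, T^[n] ⁻¹' B j with hU
    have hcover : (univ : Set Ω) ⊆ S j t ∪ U := by
      intro x _
      by_cases hx : x ∈ S j t
      · exact Or.inl hx
      · simp only [hS, mem_setOf_eq, not_forall] at hx
        obtain ⟨n, hn1, hnle, hnB⟩ := hx
        refine Or.inr ?_
        have hnN : n ≤ N := Nat.le_floor hnle
        exact mem_biUnion (Finset.mem_Icc.mpr ⟨hn1, hnN⟩) (not_not.mp hnB)
    have hUle : μ U ≤ N * μ (B j) := by
      calc μ U ≤ ∑ n ∈ Finset.Icc 1 N, μ (T^[n] ⁻¹' B j) := measure_biUnion_finset_le _ _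
        _ = ∑ n ∈ Finset.Icc 1 N, μ (B j) := by
            refine Finset.sum_congr rfl fun n _ => ?_
            exact (hT.iterate n).measure_preimage (hBmeas j).nullMeasurableSet
        _ = (Finset.Icc 1 N).card * μ (B j) := by rw [Finset.sum_const, nsmul_eq_mul]
        _ = N * μ (B j) := by rw [Nat.card_Icc]; simp
    have hUreal : (μ U).toReal ≤ t := by
      have h1 : (μ U).toReal ≤ ((N : ℝ≥0∞) * μ (B j)).toReal :=
        ENNReal.toReal_mono (by finiteness) hUle
      have h2 : ((N : ℝ≥0∞) * μ (B j)).toReal = (N : ℝ) * m := by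
        rw [ENNReal.toReal_mul]; simp [hmdef]
      have h3 : (N : ℝ) * m ≤ (t / m) * m := by
        have : (N : ℝ) ≤ t / m := Nat.floor_le (by positivity)
        exact mul_le_mul_of_nonneg_right this (hm j).le
      have h4 : (t / m) * m = t := div_mul_cancel₀ t (hm j).ne'
      linarith [h1, h2 ▸ h1]
    have hsum : (1 : ℝ) ≤ (μ (S j t)).toReal + (μ U).toReal := by
      have h1 : (1 : ℝ≥0∞) ≤ μ (S j t) + μ U := by
        calc (1 : ℝ≥0∞) = μ univ := (measure_univ (μ := μ)).symm
          _ ≤ μ (S j t ∪ U) := measure_mono hcover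
          _ ≤ μ (S j t) + μ U := measure_union_le _ _
      calc (1 : ℝ) = (1 : ℝ≥0∞).toReal := by simp
        _ ≤ (μ (S j t) + μ U).toReal := ENNReal.toReal_mono (ENNReal.add_ne_top.mpr ⟨measure_ne_top μ _, measure_ne_top μ _⟩) h1
        _ = (μ (S j t)).toReal + (μ U).toReal :=
            ENNReal.toReal_add (measure_ne_top μ _) (measure_ne_top μ _)
    linarith
  -- antitonicity of F on (0, ∞)
  have hant : ∀ s t : ℝ, 0 < s → s ≤ t → F t ≤ F s := by
    intro s t hs hst
    refine le_of_tendsto_of_tendsto' (hF t (hs.trans_le hst)) (hF s hs) fun j => ?_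
    refine ENNReal.toReal_mono (measure_ne_top μ _) (measure_mono ?_)
    intro x hx n hn1 hnle
    exact hx n hn1 (hnle.trans (div_le_div_of_nonneg_right hst (hm j).le))
  -- globally antitone extension of F
  set G : ℝ → ℝ := fun t => if 0 < t then F t else 1 with hG
  have hGF : ∀ t : ℝ, 0 < t → G t = F t := fun t ht => if_pos ht
  have hGanti : Antitone G := by
    intro a b hab
    by_cases ha : 0 < a
    · rw [hGF a ha, hGF b (ha.trans_le hab)]
      exact hant a b ha hab
    · have : G a = 1 := if_neg ha
      rw [this]
      by_cases hb : 0 < b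
      · rw [hGF b hb]; exact hub b hb
      · rw [hG]; simp [hb]
  have hGmeas : Measurable G := hGanti.measurable
  have hGnn : ∀ t : ℝ, 0 < t → 0 ≤ G t := fun t ht => (hGF t ht).symm ▸ hnn t ht
  -- the integral equation for G
  have hGint : ∀ t : ℝ, 0 < t → G t = ∫ s in Set.Ioi t, G s := by
    intro t ht
    rw [hGF t ht, hInt t ht]
    refine setIntegral_congr_fun measurableSet_Ioi fun s hs => ?_
    rw [hGF s (ht.trans hs), hEq s (ht.trans hs)]
  -- integrability of G on Ioi t
  have hGIntOn : ∀ t : ℝ, 0 < t → IntegrableOn G (Set.Ioi t) := by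
    intro t ht
    by_contra h
    have h0 : G t = 0 := by rw [hGint t ht, integral_undef h]
    have hz : EqOn G 0 (Set.Ioi t) := by
      intro s hs
      have h1 : G s ≤ 0 := h0 ▸ hGanti (le_of_lt hs)
      have h2 : 0 ≤ G s := hGnn s (ht.trans hs)
      simpa using le_antisymm h1 h2
    exact h ((integrableOn_congr_fun hz measurableSet_Ioi).mpr (integrableOn_zero))
  -- interval integrability
  have hII : ∀ a b : ℝ, 0 < a → 0 < b → IntervalIntegrable G volume a b := by
    intro a b ha hb
    refine IntegrableOn.intervalIntegrable ?_
    refine (hGIntOn (min a b / 2) (by positivity)).mono_set ?_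
    intro x hx
    have := hx.1
    simp only [Set.mem_Ioi]
    calc min a b / 2 < min a b := by
          have : 0 < min a b := lt_min ha hb
          linarith
      _ ≤ x := hx.1
  -- splitting the integral
  have hsplit : ∀ a b : ℝ, 0 < a → a ≤ b → G a = G b + ∫ x in a..b, G x := by
    intro a b ha hab
    have hb : 0 < b := ha.trans_le hab
    have hunion : Set.Ioc a b ∪ Set.Ioi b = Set.Ioi a := Set.Ioc_union_Ioi_eq_Ioi hab
    have hdisj : Disjoint (Set.Ioc a b) (Set.Ioi b) := Set.Ioc_disjoint_Ioi le_rfl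
    have hint1 : IntegrableOn G (Set.Ioc a b) := (hGIntOn a ha).mono_set Set.Ioc_subset_Ioi_self
    have hint2 : IntegrableOn G (Set.Ioi b) := hGIntOn b hb
    have := setIntegral_union hdisj measurableSet_Ioi hint1 hint2
    rw [hunion] at this
    rw [hGint a ha, this, hGint b hb, intervalIntegral.integral_of_le hab]
    ring
  have hrep : ∀ t : ℝ, 0 < t → G t = G 1 - ∫ x in (1:ℝ)..t, G x := by
    intro t ht
    rcases le_total t 1 with h | h
    · have := hsplit t 1 ht h
      rw [intervalIntegral.integral_symm]
      linarith
    · have := hsplit 1 t one_pos h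
      linarith
  -- continuity of G on (0, ∞)
  have hGcont : ∀ t : ℝ, 0 < t → ContinuousAt G t := by
    intro t ht
    have hprim : ContinuousAt (fun b => ∫ x in (1:ℝ)..b, G x) t := by
      have hint : IntervalIntegrable G volume (min 1 (t/2)) (max 1 (t+1)) :=
        hII _ _ (by positivity) (by positivity)
      have hcw := intervalIntegral.continuousWithinAt_primitive (μ := volume)
        (f := G) (a := 1) (b₀ := t) (b₁ := t/2) (b₂ := t+1)
        (measure_singleton t) hint
      exact hcw.continuousAt (Icc_mem_nhds (by linarith) (by linarith))
    have hc : ContinuousAt (fun b => G 1 - ∫ x in (1:ℝ)..b, G x) t :=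
      continuousAt_const.sub hprim
    refine hc.congr ?_
    filter_upwards [isOpen_Ioi.mem_nhds (Set.mem_Ioi.mpr ht)] with s hs
    exact (hrep s hs).symm
  -- derivative of G
  have hderiv : ∀ t : ℝ, 0 < t → HasDerivAt G (-G t) t := by
    intro t ht
    have hprim : HasDerivAt (fun b => ∫ x in (1:ℝ)..b, G x) (G t) t :=
      intervalIntegral.integral_hasDerivAt_right (hII 1 t one_pos ht)
        hGmeas.aestronglyMeasurable.stronglyMeasurableAtFilter (hGcont t ht)
    have hd : HasDerivAt (fun b => G 1 - ∫ x in (1:ℝ)..b, G x) (-(G t)) t := by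
      have := (hasDerivAt_const t (G 1)).sub hprim
      rwa [zero_sub] at this
    refine hd.congr_of_eventuallyEq ?_
    filter_upwards [isOpen_Ioi.mem_nhds (Set.mem_Ioi.mpr ht)] with s hs
    exact hrep s hs
  -- exp t * G t is constant on (0, ∞)
  set H : ℝ → ℝ := fun t => Real.exp t * G t with hH
  have hHd : ∀ t : ℝ, 0 < t → HasDerivAt H 0 t := by
    intro t ht
    have := (Real.hasDerivAt_exp t).mul (hderiv t ht)
    exact this.congr_deriv (by ring)
  have hHconst : ∀ a b : ℝ, 0 < a → a ≤ b → H a = H b := by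
    intro a b ha hab
    have key := constant_of_has_deriv_right_zero (f := H) (a := a) (b := b)
      (fun x hx => ((hHd x (ha.trans_le hx.1)).continuousAt).continuousWithinAt)
      (fun x hx => ((hHd x (ha.trans_le hx.1)).hasDerivWithinAt))
    exact (key b (Set.right_mem_Icc.mpr hab)).symm
  have hHone : ∀ t : ℝ, 0 < t → H t = H 1 := by
    intro t ht
    rcases le_total t 1 with h | h
    · exact hHconst t 1 ht h
    · exact (hHconst 1 t one_pos h).symm
  set c : ℝ := H 1 with hc
  have hGc : ∀ t : ℝ, 0 < t → G t = c * Real.exp (-t) := by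
    intro t ht
    have h1 : Real.exp t * G t = c := hHone t ht
    rw [Real.exp_neg]
    field_simp
    linarith [h1]
  -- c = 1
  have hcle : c ≤ 1 := by
    have l1 : Filter.Tendsto (fun t : ℝ => c * Real.exp (-t)) (nhdsWithin 0 (Set.Ioi 0))
        (nhds c) := by
      have : Filter.Tendsto (fun t : ℝ => c * Real.exp (-t)) (nhds 0) (nhds (c * Real.exp (-0))) :=
        (continuous_const.mul (Real.continuous_exp.comp continuous_neg)).tendsto 0
      simpa using this.mono_left nhdsWithin_le_nhds
    refine le_of_tendsto l1 ?_
    filter_upwards [self_mem_nhdsWithin] with t ht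
    have := hub t ht
    rw [← hGF t ht, hGc t ht] at this
    exact this
  have hcge : (1:ℝ) ≤ c := by
    have l1 : Filter.Tendsto (fun t : ℝ => c * Real.exp (-t)) (nhdsWithin 0 (Set.Ioi 0))
        (nhds c) := by
      have : Filter.Tendsto (fun t : ℝ => c * Real.exp (-t)) (nhds 0) (nhds (c * Real.exp (-0))) :=
        (continuous_const.mul (Real.continuous_exp.comp continuous_neg)).tendsto 0
      simpa using this.mono_left nhdsWithin_le_nhds
    have l2 : Filter.Tendsto (fun t : ℝ => 1 - t) (nhdsWithin 0 (Set.Ioi 0)) (nhds 1) := by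
      have : Filter.Tendsto (fun t : ℝ => 1 - t) (nhds 0) (nhds (1 - 0)) :=
        (continuous_const.sub continuous_id).tendsto 0
      simpa using this.mono_left nhdsWithin_le_nhds
    refine le_of_tendsto_of_tendsto l2 l1 ?_
    filter_upwards [self_mem_nhdsWithin] with t ht
    have h1 := hlb t ht
    rw [← hGF t ht, hGc t ht] at h1
    exact h1
  have hc1 : c = 1 := le_antisymm hcle hcge
  intro t ht
  rw [← hGF t ht, hGc t ht, hc1, one_mul]
end

section
/- Let (Ω, μ, T) be an ergodic probability-preserving system and U ⊆ Ω with μ(U) > 0. Then ∫_Ω τ_U dμ < ∞ if and only if ∫_U τ_U² dμ < ∞. -/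
open MeasureTheory Set Function ENNReal

open Filter Topology

lemma tauE_ge_iff {Ω : Type*} (T : Ω → Ω) (U : Set Ω) (j : ℕ) (x : Ω) :
    (j : ℕ∞) ≤ tauE T U x ↔ ∀ k, 1 ≤ k → k < j → T^[k] x ∉ U := by
  rw [tauE, le_sInf_iff]
  constructor
  · intro h k hk1 hkj hkU
    have h2 := h (k : ℕ∞) ⟨k, ⟨hk1, hkU⟩, rfl⟩
    rw [Nat.cast_le] at h2
    omega
  · rintro h e ⟨k, ⟨hk0, hkU⟩, rfl⟩
    have : ¬ k < j := fun hlt => h k hk0 hlt hkU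
    show (j:ℕ∞) ≤ (k:ℕ∞)
    exact_mod_cast Nat.le_of_not_lt this

lemma sumOdd (k : ℕ) : ∑ n ∈ Finset.range k, (2*n+1) = k^2 := by
  induction k with
  | zero => simp
  | succ k ih => rw [Finset.sum_range_succ, ih]; ring

lemma tsum_ite_one (m : ℕ∞) :
    ∑' n : ℕ, (if ((n : ℕ∞) + 1 ≤ m) then (1:ℝ≥0∞) else 0) = (m : ℝ≥0∞) := by
  cases m using ENat.recTopCoe with
  | top =>
    simp only [le_top, if_true]
    simp [ENNReal.tsum_const_eq_top_of_ne_zero one_ne_zero]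
  | coe k =>
    rw [tsum_eq_sum (s := Finset.range k) (fun n hn => by
      rw [if_neg]
      intro hle
      exact hn (Finset.mem_range.mpr (by exact_mod_cast Nat.lt_of_succ_le (by exact_mod_cast hle))))]
    rw [Finset.sum_congr rfl (fun n hn => if_pos (by
      exact_mod_cast Nat.succ_le_of_lt (Finset.mem_range.mp hn)))]
    simp

lemma tsum_ite_sq (m : ℕ∞) :
    ∑' n : ℕ, (if ((n : ℕ∞) + 1 ≤ m) then ((2*n+1 : ℕ) : ℝ≥0∞) else 0) = (m : ℝ≥0∞)^2 := by
  cases m using ENat.recTopCoe with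
  | top =>
    simp only [le_top, if_true, ENat.toENNReal_top]
    rw [ENNReal.top_pow (by norm_num)]
    refine top_le_iff.mp ?_
    calc (⊤:ℝ≥0∞) = ∑' _ : ℕ, (1:ℝ≥0∞) := (ENNReal.tsum_const_eq_top_of_ne_zero one_ne_zero).symm
    _ ≤ _ := ENNReal.tsum_le_tsum (fun n => by exact_mod_cast Nat.one_le_iff_ne_zero.mpr (by omega))
  | coe k =>
    rw [tsum_eq_sum (s := Finset.range k) (fun n hn => by
      rw [if_neg]
      intro hle
      exact hn (Finset.mem_range.mpr (by exact_mod_cast Nat.lt_of_succ_le (by exact_mod_cast hle))))]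
    rw [Finset.sum_congr rfl (fun n hn => if_pos (by
      exact_mod_cast Nat.succ_le_of_lt (Finset.mem_range.mp hn)))]
    rw [← Nat.cast_sum, sumOdd]
    simp

theorem stmt12 {Ω : Type*} [MeasurableSpace Ω] (μ : Measure Ω) [IsProbabilityMeasure μ]
    (T : Ω → Ω) (hT : MeasurePreserving T μ μ) (hTerg : Ergodic T μ)
    (U : Set Ω) (hU : MeasurableSet U) (hUpos : 0 < μ U) :
    (∫⁻ x, ((tauE T U x : ℝ≥0∞)) ∂μ < ⊤) ↔
      (∫⁻ x in U, ((tauE T U x : ℝ≥0∞)) ^ 2 ∂μ < ⊤) := by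
  have hTm : Measurable T := hT.measurable
  set S : ℕ → Set Ω := fun j => {x | (j : ℕ∞) ≤ tauE T U x} with hSdef
  have hSiff : ∀ j x, x ∈ S j ↔ ∀ k, 1 ≤ k → k < j → T^[k] x ∉ U :=
    fun j x => tauE_ge_iff T U j x
  have hSmeas : ∀ j, MeasurableSet (S j) := by
    intro j
    have : S j = ⋂ k ∈ Finset.Ico 1 j, (T^[k]) ⁻¹' Uᶜ := by
      ext x
      simp only [hSiff, mem_iInter, Finset.mem_Ico, mem_preimage, mem_compl_iff]
      exact ⟨fun h k hk => h k hk.1 hk.2, fun h k h1 h2 => h k ⟨h1, h2⟩⟩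
    rw [this]
    exact Finset.measurableSet_biInter _ (fun k _ => (hTm.iterate k) hU.compl)
  have hSanti : Antitone S := by
    intro i j hij x hx
    have hx' : (j : ℕ∞) ≤ tauE T U x := hx
    show (i : ℕ∞) ≤ tauE T U x
    exact le_trans (Nat.cast_le.mpr hij) hx'
  set a : ℕ → ℝ≥0∞ := fun j => μ (U ∩ S j) with hadef
  set b : ℕ → ℝ≥0∞ := fun j => μ (S j) with hbdef
  have hb1 : b 1 = 1 := by
    have : S 1 = univ := eq_univ_of_forall (fun x => (hSiff 1 x).mpr (fun k h1 h2 => by omega))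
    simp [hbdef, this]
  -- set recursion
  have hSrec : ∀ k : ℕ, S (k+2) = T ⁻¹' (Uᶜ ∩ S (k+1)) := by
    intro k
    ext x
    simp only [mem_preimage, mem_inter_iff, mem_compl_iff, hSiff]
    constructor
    · intro h
      refine ⟨by simpa using h 1 le_rfl (by omega), fun m h1 h2 => ?_⟩
      have := h (m+1) (by omega) (by omega)
      rwa [Function.iterate_succ_apply] at this
    · rintro ⟨h1, h2⟩ m hm1 hm2
      rcases Nat.exists_eq_add_of_le hm1 with ⟨m', rfl⟩
      cases m' with
      | zero => simpa using h1
      | succ n =>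
        have he : 1 + (n+1) = n + 2 := by omega
        rw [he, Function.iterate_succ_apply]
        exact h2 (n+1) (by omega) (by omega)
  have hrec : ∀ k : ℕ, b (k+1) = a (k+1) + b (k+2) := by
    intro k
    have hsplit := measure_inter_add_diff (S (k+1)) hU (μ := μ)
    have h2 : b (k+2) = μ (S (k+1) \ U) := by
      show μ (S (k+2)) = _
      rw [hSrec k, hT.measure_preimage ((hU.compl.inter (hSmeas (k+1))).nullMeasurableSet),
        inter_comm, ← Set.diff_eq]
    show μ (S (k+1)) = μ (U ∩ S (k+1)) + b (k+2)
    rw [h2, inter_comm]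
    exact hsplit.symm
  have hpartial : ∀ n : ℕ, (∑ i ∈ Finset.range n, a (i+1)) + b (n+1) = 1 := by
    intro n
    induction n with
    | zero => simpa using hb1
    | succ n ih =>
      rw [Finset.sum_range_succ, add_assoc, ← hrec n]
      exact ih
  -- ergodicity: the tail intersection is null
  have hinter : μ (⋂ n, S (n+1)) = 0 := by
    set W : Set Ω := ⋃ k : ℕ, (T^[k]) ⁻¹' U with hWdef
    have hWmeas : MeasurableSet W := MeasurableSet.iUnion (fun k => (hTm.iterate k) hU)
    have hWpre : T ⁻¹' W ⊆ W := by
      rw [hWdef, preimage_iUnion]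
      refine iUnion_subset (fun k => ?_)
      have : T ⁻¹' ((T^[k]) ⁻¹' U) = (T^[k+1]) ⁻¹' U := by
        rw [Function.iterate_succ]
        rfl
      rw [this]
      exact subset_iUnion (fun k => (T^[k]) ⁻¹' U) (k+1)
    have hW01 := hTerg.ae_empty_or_univ_of_preimage_ae_le hWmeas.nullMeasurableSet
      (HasSubset.Subset.eventuallyLE hWpre)
    have hWU : U ⊆ W := by
      intro x hx
      exact mem_iUnion.mpr ⟨0, by simpa using hx⟩
    have hW1 : μ W = 1 := by
      rcases hW01 with h | h
      · exfalso
        have : μ W = 0 := by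
          rw [measure_congr h]; simp
        exact absurd (measure_mono hWU) (by rw [this]; exact fun hh => hUpos.ne' (le_antisymm (le_trans hh (le_refl 0)) zero_le) )
      · rw [measure_congr h]; simp
    have hTW1 : μ (T ⁻¹' W) = 1 := by
      rw [hT.measure_preimage hWmeas.nullMeasurableSet, hW1]
    have hsub : (⋂ n, S (n+1)) ⊆ (T ⁻¹' W)ᶜ := by
      intro x hx hxW
      rcases mem_iUnion.mp hxW with ⟨k, hk⟩
      rw [mem_preimage, ← Function.iterate_succ_apply] at hk
      have hxS := mem_iInter.mp hx (k+1)
      exact (hSiff (k+2) x).mp hxS (k+1) (by omega) (by omega) hk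
    have : μ ((T ⁻¹' W)ᶜ) = 0 := by
      rw [measure_compl (hTm hWmeas) (measure_ne_top _ _), hTW1]
      simp
    exact measure_mono_null hsub this
  have hblim : Tendsto (fun n => b (n+1)) atTop (𝓝 0) := by
    have := tendsto_measure_iInter_atTop (μ := μ) (s := fun n => S (n+1))
      (fun n => (hSmeas (n+1)).nullMeasurableSet)
      (fun i j hij => hSanti (by omega)) ⟨0, measure_ne_top _ _⟩
    rwa [hinter] at this
  have htsum : ∑' i : ℕ, a (i+1) = 1 := by
    have h1 : Tendsto (fun n => (∑ i ∈ Finset.range n, a (i+1)) + b (n+1)) atTop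
        (𝓝 ((∑' i : ℕ, a (i+1)) + 0)) :=
      (ENNReal.tendsto_nat_tsum _).add hblim
    have h2 : Tendsto (fun n => (∑ i ∈ Finset.range n, a (i+1)) + b (n+1)) atTop (𝓝 1) := by
      simp only [hpartial]
      exact tendsto_const_nhds
    have := tendsto_nhds_unique h1 h2
    simpa using this
  have hpartial_ne : ∀ n : ℕ, (∑ i ∈ Finset.range n, a (i+1)) ≠ ⊤ := by
    intro n
    have : (∑ i ∈ Finset.range n, a (i+1)) ≤ 1 := by
      rw [← hpartial n]; exact self_le_add_right _ _
    exact ne_top_of_le_ne_top one_ne_top this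
  have hbtail : ∀ n : ℕ, b (n+1) = ∑' i : ℕ, a (i + n + 1) := by
    intro n
    have h1 := Summable.sum_add_tsum_nat_add' (f := fun i => a (i+1)) (k := n) ENNReal.summable
    rw [htsum] at h1
    rw [← hpartial n] at h1
    exact (ENNReal.add_right_inj (hpartial_ne n)).mp h1.symm
  -- the two integrals as series
  have hI : ∫⁻ x, ((tauE T U x : ℝ≥0∞)) ∂μ = ∑' n : ℕ, b (n+1) := by
    have hpt : ∀ x, ((tauE T U x : ℝ≥0∞)) =
        ∑' n : ℕ, (S (n+1)).indicator (fun _ => (1:ℝ≥0∞)) x := by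
      intro x
      rw [← tsum_ite_one (tauE T U x)]
      congr 1
      funext n
      have hcast : (((n+1:ℕ)):ℕ∞) = (n:ℕ∞)+1 := by push_cast; ring
      by_cases h : ((n:ℕ∞) + 1 ≤ tauE T U x)
      · rw [if_pos h, Set.indicator_of_mem]
        show (((n+1:ℕ)):ℕ∞) ≤ tauE T U x
        rw [hcast]; exact h
      · rw [if_neg h, Set.indicator_of_notMem]
        show ¬ (((n+1:ℕ)):ℕ∞) ≤ tauE T U x
        rw [hcast]; exact h
    rw [lintegral_congr hpt, lintegral_tsum
      (fun n => (measurable_const.indicator (hSmeas (n+1))).aemeasurable)]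
    congr 1
    funext n
    rw [lintegral_indicator_const (hSmeas (n+1))]
    simp [hbdef]
  have hJ : ∫⁻ x in U, ((tauE T U x : ℝ≥0∞)) ^ 2 ∂μ
      = ∑' n : ℕ, ((2*n+1 : ℕ) : ℝ≥0∞) * a (n+1) := by
    have hpt : ∀ x, ((tauE T U x : ℝ≥0∞)) ^ 2 =
        ∑' n : ℕ, (S (n+1)).indicator (fun _ => ((2*n+1:ℕ) : ℝ≥0∞)) x := by
      intro x
      rw [← tsum_ite_sq (tauE T U x)]
      congr 1
      funext n
      have hcast : (((n+1:ℕ)):ℕ∞) = (n:ℕ∞)+1 := by push_cast; ring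
      by_cases h : ((n:ℕ∞) + 1 ≤ tauE T U x)
      · rw [if_pos h, Set.indicator_of_mem]
        show (((n+1:ℕ)):ℕ∞) ≤ tauE T U x
        rw [hcast]; exact h
      · rw [if_neg h, Set.indicator_of_notMem]
        show ¬ (((n+1:ℕ)):ℕ∞) ≤ tauE T U x
        rw [hcast]; exact h
    rw [lintegral_congr hpt, lintegral_tsum
      (fun n => (measurable_const.indicator (hSmeas (n+1))).aemeasurable)]
    congr 1
    funext n
    rw [lintegral_indicator_const (hSmeas (n+1)), Measure.restrict_apply (hSmeas (n+1))]
    rw [hadef]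
    simp [inter_comm]
  -- diagonal resummation: ∑ b(n+1) = ∑ (n+1) a(n+1)
  have hIA : ∑' n : ℕ, b (n+1) = ∑' n : ℕ, ((n+1 : ℕ) : ℝ≥0∞) * a (n+1) := by
    have step1 : ∀ n : ℕ, b (n+1) = ∑' k : ℕ, (if n ≤ k then a (k+1) else 0) := by
      intro n
      rw [hbtail n]
      have h2 : (∑ k ∈ Finset.range n, (if n ≤ k then a (k+1) else 0)) +
          (∑' i : ℕ, (if n ≤ i + n then a (i + n + 1) else 0)) =
          ∑' k : ℕ, (if n ≤ k then a (k+1) else 0) :=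
        Summable.sum_add_tsum_nat_add' (f := fun k => if n ≤ k then a (k+1) else 0) (k := n)
          ENNReal.summable
      have h3 : (∑ k ∈ Finset.range n, (if n ≤ k then a (k+1) else 0)) = 0 :=
        Finset.sum_eq_zero (fun k hk => if_neg (by
          have := Finset.mem_range.mp hk; omega))
      rw [← h2, h3, zero_add]
      congr 1
      funext i
      rw [if_pos (by omega)]
    calc ∑' n : ℕ, b (n+1) = ∑' (n : ℕ) (k : ℕ), (if n ≤ k then a (k+1) else 0) := by
          congr 1; funext n; exact step1 n
      _ = ∑' (k : ℕ) (n : ℕ), (if n ≤ k then a (k+1) else 0) := ENNReal.tsum_comm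
      _ = ∑' k : ℕ, ((k+1 : ℕ) : ℝ≥0∞) * a (k+1) := by
          congr 1
          funext k
          rw [tsum_eq_sum (s := Finset.range (k+1)) (fun n hn => if_neg (by
            have : ¬ n < k+1 := fun h => hn (Finset.mem_range.mpr h); omega))]
          rw [Finset.sum_congr rfl (fun n hn => if_pos (by
            have := Finset.mem_range.mp hn; omega))]
          rw [Finset.sum_const, Finset.card_range, nsmul_eq_mul]
  -- algebra to conclude
  rw [hI, hIA, hJ]
  have h2I : 2 * ∑' n : ℕ, ((n+1 : ℕ) : ℝ≥0∞) * a (n+1)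
      = (∑' n : ℕ, ((2*n+1 : ℕ) : ℝ≥0∞) * a (n+1)) + 1 := by
    rw [← ENNReal.tsum_mul_left, ← htsum, ← ENNReal.tsum_add]
    congr 1
    funext n
    push_cast
    ring
  constructor
  · intro hfin
    have hle : (∑' n : ℕ, ((2*n+1 : ℕ) : ℝ≥0∞) * a (n+1))
        ≤ 2 * ∑' n : ℕ, ((n+1 : ℕ) : ℝ≥0∞) * a (n+1) := by
      rw [← ENNReal.tsum_mul_left]
      refine ENNReal.tsum_le_tsum (fun n => ?_)
      rw [← mul_assoc]
      refine mul_le_mul_left ?_ _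
      push_cast
      calc (2*(n:ℝ≥0∞)+1) ≤ 2*n+2 := by
            refine add_le_add le_rfl ?_
            exact one_le_two
        _ = 2 * ((n:ℝ≥0∞)+1) := by ring
    exact lt_of_le_of_lt hle (ENNReal.mul_lt_top (by norm_num) hfin)
  · intro hfin
    have : 2 * ∑' n : ℕ, ((n+1 : ℕ) : ℝ≥0∞) * a (n+1) < ⊤ := by
      rw [h2I]
      exact ENNReal.add_lt_top.mpr ⟨hfin, one_lt_top⟩
    have hle : (∑' n : ℕ, ((n+1 : ℕ) : ℝ≥0∞) * a (n+1))
        ≤ 2 * ∑' n : ℕ, ((n+1 : ℕ) : ℝ≥0∞) * a (n+1) :=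
      le_mul_of_one_le_left zero_le one_le_two
    exact lt_of_le_of_lt hle this
end

section
/- With p_i = (i/(i+1))^α for some α ∈ (1,2), in the Markov shift on ℕ^ℤ described above with U = {ω_0 = 1}, the return time τ_U is integrable over U (by Kac) but ∫_Ω τ_U dμ = Σ_{j,k} k x_1 P_{j+k−1} q_{j+k−1} = ∞. -/
open MeasureTheory Set Function ENNReal Real

def shift (ω : ℤ → ℕ) : ℤ → ℕ := fun n => ω (n + 1)

lemma shift_iter (ω : ℤ → ℕ) (j : ℕ) : shift^[j] ω = fun m => ω (m + j) := by
  induction j with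
  | zero => simp
  | succ j ih =>
    rw [Function.iterate_succ_apply', ih]
    funext m
    show ω (m + 1 + (j:ℤ)) = ω (m + ((j:ℕ)+1 : ℕ))
    congr 1
    push_cast
    ring

lemma lt_tau_iff {B : Set (ℤ → ℕ)} {x : ℤ → ℕ} {n : ℕ} :
    (n : ℕ∞) < tauE shift B x ↔ ∀ j : ℕ, 0 < j → j ≤ n → shift^[j] x ∉ B := by
  constructor
  · intro h j hj0 hjn hB
    have h1 : tauE shift B x ≤ (j : ℕ∞) := sInf_le ⟨j, ⟨hj0, hB⟩, rfl⟩
    have h2 : (n:ℕ∞) < (j:ℕ∞) := lt_of_lt_of_le h h1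
    have := Nat.cast_lt.mp h2
    omega
  · intro h
    have h1 : ((n+1 : ℕ) : ℕ∞) ≤ tauE shift B x := by
      apply le_sInf
      rintro a ⟨j, ⟨hj0, hB⟩, rfl⟩
      have hle : n + 1 ≤ j := by
        by_contra hc
        exact h j hj0 (by omega) hB
      show ((n+1:ℕ):ℕ∞) ≤ (j:ℕ∞)
      exact_mod_cast hle
    calc (n:ℕ∞) < ((n+1:ℕ):ℕ∞) := by exact_mod_cast Nat.lt_succ_self n
    _ ≤ _ := h1

lemma enat_coe_tsum (a : ℕ∞) :
    (a : ℝ≥0∞) = ∑' n : ℕ, if (n : ℕ∞) < a then (1:ℝ≥0∞) else 0 := by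
  induction a using ENat.recTopCoe with
  | top =>
    rw [ENat.toENNReal_top]
    have h : ∀ n : ℕ, (if (n:ℕ∞) < ⊤ then (1:ℝ≥0∞) else 0) = 1 := by
      intro n
      rw [if_pos (by exact_mod_cast lt_top_iff_ne_top.mpr (by simp))]
    rw [tsum_congr h]
    exact (ENNReal.tsum_const_eq_top_of_ne_zero one_ne_zero).symm
  | coe m =>
    rw [ENat.toENNReal_coe]
    have h : ∀ n : ℕ, (if (n:ℕ∞) < (m:ℕ∞) then (1:ℝ≥0∞) else 0) = if n < m then 1 else 0 := by
      intro n; simp [Nat.cast_lt]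
    rw [tsum_congr h, tsum_eq_sum (s := Finset.range m) (by intro b hb; rw [if_neg (by simpa using hb)])]
    rw [Finset.sum_congr rfl (fun b hb => if_pos (Finset.mem_range.mp hb))]
    simp

theorem stmt15 (α : ℝ) (hα : α ∈ Set.Ioo (1 : ℝ) 2)
    (p : ℕ → ℝ) (hp : ∀ i : ℕ, p i = ((i : ℝ) / (i + 1)) ^ α)
    (M : ℕ → ℕ → ℝ)
    (hM : ∀ j k : ℕ, 1 ≤ j →
      M j k = if k = 1 then 1 - p j else if k = j + 1 then p j else 0)
    (hM0 : ∀ k : ℕ, M 0 k = 0)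
    (P : ℕ → ℝ) (hP1 : P 1 = 1) (hPrec : ∀ j : ℕ, 1 ≤ j → P (j + 1) = P j * p j)
    (x : ℕ → ℝ) (hx0 : x 0 = 0) (hx1 : x 1 = (∑' j : ℕ, P (j + 1))⁻¹)
    (hxj : ∀ j : ℕ, 1 ≤ j → x j = x 1 * P j)
    (μ : Measure (ℤ → ℕ)) [IsProbabilityMeasure μ]
    (hshift : MeasurePreserving shift μ μ)
    (hcyl : ∀ (n : ℕ) (w : ℕ → ℕ),
      μ {ω : ℤ → ℕ | ∀ i : ℕ, i ≤ n → ω (i : ℤ) = w i} =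
        ENNReal.ofReal (x (w 0) * ∏ i ∈ Finset.range n, M (w i) (w (i + 1))))
    (U : Set (ℤ → ℕ)) (hU : U = {ω : ℤ → ℕ | ω 0 = 1}) :
    (∫⁻ ω in U, ((tauE shift U ω : ℝ≥0∞)) ∂μ) ≠ ⊤ ∧
      (∫⁻ ω, ((tauE shift U ω : ℝ≥0∞)) ∂μ) = ⊤ := by
  classical
  obtain ⟨hα1, hα2⟩ := hα
  -- value of P
  have hPval : ∀ m : ℕ, 1 ≤ m → P m = (m : ℝ) ^ (-α) := by
    intro m hm
    induction m with
    | zero => omega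
    | succ m ih =>
      rcases Nat.lt_or_ge m 1 with h1 | h2
      · have : m = 0 := by omega
        subst this
        simpa using hP1
      · have hmpos : (0:ℝ) < m := by exact_mod_cast h2
        have hm1pos : (0:ℝ) < (m:ℝ) + 1 := by linarith
        have h1 : (0:ℝ) < (m:ℝ)^α := Real.rpow_pos_of_pos hmpos α
        have h2' : (0:ℝ) < ((m:ℝ)+1)^α := Real.rpow_pos_of_pos hm1pos α
        rw [hPrec m h2, ih h2, hp m]
        rw [Real.div_rpow hmpos.le hm1pos.le, Real.rpow_neg hmpos.le]
        push_cast
        rw [Real.rpow_neg hm1pos.le]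
        field_simp
  -- positivity of x 1
  have hPsummand : ∀ j : ℕ, P (j+1) = ((j:ℝ)+1) ^ (-α) := by
    intro j
    rw [hPval (j+1) (by omega)]
    push_cast
    ring_nf
  have hsumP : Summable (fun j : ℕ => P (j+1)) := by
    have h : Summable (fun n : ℕ => 1 / (n:ℝ)^α) := Real.summable_one_div_nat_rpow.mpr hα1
    have h2 := (summable_nat_add_iff 1).mpr h
    apply h2.congr
    intro j
    rw [hPsummand j, Real.rpow_neg (by positivity), one_div]
    push_cast
    ring_nf
  have hx1pos : 0 < x 1 := by
    rw [hx1]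
    apply inv_pos.mpr
    apply Summable.tsum_pos hsumP (fun j => by rw [hPsummand j]; positivity) 0
    rw [hPsummand 0]
    positivity
  -- telescoping
  have htel : ∀ j : ℕ, 1 ≤ j → ∀ N : ℕ,
      P j * ∏ i ∈ Finset.range N, M (j+i) (j+i+1) = P (j+N) := by
    intro j hj N
    induction N with
    | zero => simp
    | succ N ih =>
      rw [Finset.prod_range_succ, ← mul_assoc, ih]
      have hjN : 1 ≤ j + N := by omega
      rw [hM (j+N) (j+N+1) hjN, if_neg (by omega), if_pos rfl]
      exact (hPrec (j+N) hjN).symm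
  -- word lemma
  have hword : ∀ (m : ℕ) (w : ℕ → ℕ), w 0 = 1 → (∀ i, 1 ≤ i → i ≤ m → w i ≠ 1) →
      ∏ i ∈ Finset.range m, M (w i) (w (i+1)) =
        if ∀ i ≤ m, w i = i + 1 then P (m+1) else 0 := by
    intro m
    induction m with
    | zero =>
      intro w h0 _
      rw [if_pos (by intro i hi; interval_cases i; omega)]
      simpa using hP1.symm
    | succ m ih =>
      intro w h0 hne
      rw [Finset.prod_range_succ, ih w h0 (fun i h1 h2 => hne i h1 (by omega))]
      by_cases hc : ∀ i ≤ m, w i = i + 1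
      · rw [if_pos hc]
        have hwm : w m = m + 1 := hc m le_rfl
        have hwm1ne : w (m+1) ≠ 1 := hne (m+1) (by omega) le_rfl
        rw [hwm, hM (m+1) (w (m+1)) (by omega), if_neg hwm1ne]
        by_cases hc2 : w (m+1) = m + 2
        · rw [if_pos hc2, if_pos (by
            intro i hi
            rcases Nat.lt_or_ge i (m+1) with h | h
            · exact hc i (by omega)
            · have : i = m + 1 := by omega
              subst this; omega)]
          exact (hPrec (m+1) (by omega)).symm
        · rw [if_neg hc2, if_neg (by
            intro hall
            exact hc2 (hall (m+1) le_rfl)), mul_zero]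
      · rw [if_neg hc, zero_mul,
          if_neg (fun hall => hc fun i hi => hall i (by omega))]
  -- membership of shifted orbit in U
  have hmem : ∀ (j : ℕ) (ω : ℤ → ℕ), (shift^[j] ω ∈ U ↔ ω (j:ℤ) = 1) := by
    intro j ω
    rw [hU, shift_iter]
    show ω (0 + (j:ℤ)) = 1 ↔ ω (j:ℤ) = 1
    rw [zero_add]
  -- description of {n < tau}
  have hTset : ∀ n : ℕ, {ω : ℤ → ℕ | (n:ℕ∞) < tauE shift U ω} =
      ⋂ j ∈ Finset.Icc 1 n, {ω : ℤ → ℕ | ω (j:ℤ) ≠ 1} := by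
    intro n
    ext ω
    simp only [Set.mem_setOf_eq, Set.mem_iInter, Finset.mem_Icc]
    rw [lt_tau_iff]
    constructor
    · rintro h j ⟨hj1, hj2⟩ he
      exact h j hj1 hj2 ((hmem j ω).mpr he)
    · intro h j hj1 hj2 hB
      exact h j ⟨hj1, hj2⟩ ((hmem j ω).mp hB)
  have hTmeas : ∀ n : ℕ, MeasurableSet {ω : ℤ → ℕ | (n:ℕ∞) < tauE shift U ω} := by
    intro n
    rw [hTset n]
    exact Finset.measurableSet_biInter _ fun j _ =>
      ((measurable_pi_apply (j:ℤ)) (measurableSet_singleton 1)).compl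
  -- layered representation
  have htsum : ∀ ω : ℤ → ℕ, ((tauE shift U ω : ℝ≥0∞)) =
      ∑' n : ℕ, Set.indicator {ω' : ℤ → ℕ | (n:ℕ∞) < tauE shift U ω'} (fun _ => (1:ℝ≥0∞)) ω := by
    intro ω
    rw [enat_coe_tsum]
    apply tsum_congr
    intro n
    by_cases h : (n:ℕ∞) < tauE shift U ω
    · rw [if_pos h]
      exact (Set.indicator_of_mem (show ω ∈ {ω' : ℤ → ℕ | (n:ℕ∞) < tauE shift U ω'} from h) (fun _ => (1:ℝ≥0∞))).symm
    · rw [if_neg h]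
      exact (Set.indicator_of_notMem (show ω ∉ {ω' : ℤ → ℕ | (n:ℕ∞) < tauE shift U ω'} from h) (fun _ => (1:ℝ≥0∞))).symm
  have hlayer : ∀ s : Set (ℤ → ℕ),
      ∫⁻ ω in s, ((tauE shift U ω : ℝ≥0∞)) ∂μ =
        ∑' n : ℕ, μ ({ω : ℤ → ℕ | (n:ℕ∞) < tauE shift U ω} ∩ s) := by
    intro s
    calc ∫⁻ ω in s, ((tauE shift U ω : ℝ≥0∞)) ∂μ
        = ∫⁻ ω in s, ∑' n : ℕ,
            Set.indicator {ω' : ℤ → ℕ | (n:ℕ∞) < tauE shift U ω'} (fun _ => (1:ℝ≥0∞)) ω ∂μ :=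
          lintegral_congr htsum
      _ = ∑' n : ℕ, ∫⁻ ω in s,
            Set.indicator {ω' : ℤ → ℕ | (n:ℕ∞) < tauE shift U ω'} (fun _ => (1:ℝ≥0∞)) ω ∂μ :=
          lintegral_tsum (fun n => (measurable_const.indicator (hTmeas n)).aemeasurable)
      _ = ∑' n : ℕ, μ ({ω : ℤ → ℕ | (n:ℕ∞) < tauE shift U ω} ∩ s) := by
          apply tsum_congr
          intro n
          rw [show (fun _ : ℤ → ℕ => (1:ℝ≥0∞)) = (1 : (ℤ → ℕ) → ℝ≥0∞) from rfl,
            lintegral_indicator_one (hTmeas n), Measure.restrict_apply (hTmeas n)]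
  have htaumeas : Measurable (fun ω : ℤ → ℕ => ((tauE shift U ω : ℝ≥0∞))) := by
    have heq : (fun ω : ℤ → ℕ => ((tauE shift U ω : ℝ≥0∞))) =
        fun ω => ∑' n : ℕ,
          Set.indicator {ω' : ℤ → ℕ | (n:ℕ∞) < tauE shift U ω'} (fun _ => (1:ℝ≥0∞)) ω :=
      funext htsum
    rw [heq]
    exact Measurable.ennreal_tsum fun n => measurable_const.indicator (hTmeas n)
  -- key cylinder bound for part 1
  have hkey : ∀ n : ℕ, μ ({ω : ℤ → ℕ | (n:ℕ∞) < tauE shift U ω} ∩ U) ≤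
      ENNReal.ofReal (x 1 * P (n+1)) := by
    intro n
    set W : (Fin (n+1) → ℕ) → (ℕ → ℕ) := fun v i => if h : i < n+1 then v ⟨i, h⟩ else 0 with hW
    set D : (Fin (n+1) → ℕ) → Set (ℤ → ℕ) := fun v =>
      if (v 0 = 1 ∧ ∀ i : Fin (n+1), 1 ≤ (i:ℕ) → v i ≠ 1)
        then {ω : ℤ → ℕ | ∀ i : ℕ, i ≤ n → ω (i:ℤ) = W v i} else ∅ with hD
    set v0 : Fin (n+1) → ℕ := fun i => (i:ℕ)+1 with hv0
    have hWv : ∀ (v : Fin (n+1) → ℕ) (i : Fin (n+1)), W v (i:ℕ) = v i := by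
      intro v i
      simp only [hW]
      rw [dif_pos i.isLt]
    have hWv' : ∀ (v : Fin (n+1) → ℕ) (i : ℕ) (h : i ≤ n), W v i = v ⟨i, by omega⟩ := by
      intro v i h
      simp only [hW]
      rw [dif_pos (by omega)]
    have hsubset : {ω : ℤ → ℕ | (n:ℕ∞) < tauE shift U ω} ∩ U ⊆ ⋃ v, D v := by
      rintro ω ⟨h1, h2⟩
      have hω0 : ω 0 = 1 := by rw [hU] at h2; exact h2
      have hωj : ∀ j : ℕ, 1 ≤ j → j ≤ n → ω (j:ℤ) ≠ 1 := by
        intro j hj1 hj2 he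
        exact (lt_tau_iff.mp h1) j hj1 hj2 ((hmem j ω).mpr he)
      refine Set.mem_iUnion.mpr ⟨fun i => ω (((i:ℕ)):ℤ), ?_⟩
      rw [hD]
      simp only
      rw [if_pos ⟨by simpa using hω0,
        fun i hi => hωj (i:ℕ) hi (Nat.lt_succ_iff.mp i.isLt)⟩]
      intro i hi
      rw [hWv' (fun i : Fin (n+1) => ω (((i:ℕ)):ℤ)) i hi]
    have hDmu : ∀ v : Fin (n+1) → ℕ, v ≠ v0 → μ (D v) = 0 := by
      intro v hv
      rw [hD]
      simp only
      by_cases hcnd : (v 0 = 1 ∧ ∀ i : Fin (n+1), 1 ≤ (i:ℕ) → v i ≠ 1)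
      · rw [if_pos hcnd]
        rw [hcyl n (W v)]
        have hw0 : W v 0 = 1 := by
          rw [hWv' v 0 (by omega)]
          have : (⟨0, by omega⟩ : Fin (n+1)) = 0 := rfl
          rw [this]
          exact hcnd.1
        rw [hword n (W v) hw0 (by
          intro i h1 h2 he
          rw [hWv' v i h2] at he
          exact hcnd.2 ⟨i, by omega⟩ (by simpa using h1) he)]
        rw [if_neg (by
          intro hall
          apply hv
          funext i
          have := hall (i:ℕ) (Nat.lt_succ_iff.mp i.isLt)
          rw [hWv v i] at this
          rw [hv0]
          exact this)]
        simp
      · rw [if_neg hcnd]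
        exact measure_empty
    have hWv0 : ∀ (i : ℕ), i ≤ n → W v0 i = i + 1 := by
      intro i h
      rw [hWv' v0 i h]
    have hc01 : v0 0 = 1 := by
      show ((0 : Fin (n+1)) : ℕ) + 1 = 1
      simp
    have hcne : ∀ i : Fin (n+1), 1 ≤ (i:ℕ) → v0 i ≠ 1 := by
      intro i hi
      show (i:ℕ) + 1 ≠ 1
      omega
    have hDv0 : μ (D v0) = ENNReal.ofReal (x 1 * P (n+1)) := by
      rw [hD]
      simp only
      rw [if_pos ⟨hc01, hcne⟩]
      rw [hcyl n (W v0)]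
      have hw0 : W v0 0 = 1 := by rw [hWv0 0 (by omega)]
      rw [hword n (W v0) hw0 (fun i h1 h2 => by rw [hWv0 i h2]; omega)]
      rw [if_pos (fun i hi => hWv0 i hi), hw0]
    calc μ ({ω : ℤ → ℕ | (n:ℕ∞) < tauE shift U ω} ∩ U)
        ≤ μ (⋃ v, D v) := measure_mono hsubset
      _ ≤ ∑' v, μ (D v) := measure_iUnion_le _
      _ = μ (D v0) := tsum_eq_single _ hDmu
      _ = _ := hDv0
  -- part 1
  have hpart1 : (∫⁻ ω in U, ((tauE shift U ω : ℝ≥0∞)) ∂μ) ≠ ⊤ := by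
    rw [hlayer U]
    have hb : ∀ n : ℕ, μ ({ω : ℤ → ℕ | (n:ℕ∞) < tauE shift U ω} ∩ U) ≤
        ENNReal.ofReal (x 1 * P (n+1)) := hkey
    have hsum2 : Summable (fun n : ℕ => x 1 * P (n+1)) := hsumP.mul_left _
    refine ne_top_of_le_ne_top ?_ (ENNReal.tsum_le_tsum hb)
    rw [← ENNReal.ofReal_tsum_of_nonneg (fun n => by
      rw [hPsummand n]; positivity) hsum2]
    exact ENNReal.ofReal_ne_top
  refine ⟨hpart1, ?_⟩
  -- measure of monotone cylinders
  have hcylN : ∀ (N j : ℕ), 1 ≤ j →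
      μ {ω : ℤ → ℕ | ∀ i : ℕ, i ≤ N → ω (i:ℤ) = j + i} =
        ENNReal.ofReal (x 1 * P (j + N)) := by
    intro N j hj
    rw [hcyl N (fun i => j + i)]
    show ENNReal.ofReal (x (j+0) * ∏ i ∈ Finset.range N, M (j+i) (j+(i+1))) = _
    rw [Nat.add_zero, hxj j hj, mul_assoc]
    congr 2
    exact htel j hj N
  have hCmeas : ∀ (N j : ℕ), MeasurableSet {ω : ℤ → ℕ | ∀ i : ℕ, i ≤ N → ω (i:ℤ) = j + i} := by
    intro N j
    have he : {ω : ℤ → ℕ | ∀ i : ℕ, i ≤ N → ω (i:ℤ) = j + i} =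
        ⋂ i ∈ Finset.range (N+1), {ω : ℤ → ℕ | ω (i:ℤ) = j + i} := by
      ext ω
      simp [Nat.lt_succ_iff]
    rw [he]
    exact Finset.measurableSet_biInter _ fun i _ =>
      (measurable_pi_apply ((i:ℕ):ℤ)) (measurableSet_singleton _)
  -- per-N lower bound
  have hbound : ∀ N : ℕ, 1 ≤ N →
      ENNReal.ofReal (x 1 * 2 ^ (-α) * (N:ℝ) ^ ((2:ℝ)-α)) ≤
        ∫⁻ ω, ((tauE shift U ω : ℝ≥0∞)) ∂μ := by
    intro N hN
    have hNpos : (0:ℝ) < N := by exact_mod_cast hN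
    set C : ℕ → Set (ℤ → ℕ) := fun j => {ω : ℤ → ℕ | ∀ i : ℕ, i ≤ N → ω (i:ℤ) = j + i} with hC
    set S : Set (ℤ → ℕ) := ⋃ j ∈ Finset.Icc 1 N, C j with hS
    have htauS : ∀ ω ∈ S, (N : ℝ≥0∞) ≤ ((tauE shift U ω : ℝ≥0∞)) := by
      intro ω hω
      rw [hS] at hω
      simp only [Set.mem_iUnion, Finset.mem_Icc] at hω
      obtain ⟨j, ⟨hj1, hj2⟩, hωC⟩ := hω
      have hωC' : ∀ i : ℕ, i ≤ N → ω (i:ℤ) = j + i := hωC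
      have hlt : (N:ℕ∞) < tauE shift U ω := by
        rw [lt_tau_iff]
        intro i h1 h2 hB
        have hv := (hmem i ω).mp hB
        rw [hωC' i h2] at hv
        omega
      calc (N:ℝ≥0∞) = ((N:ℕ∞) : ℝ≥0∞) := by simp
        _ ≤ _ := ENat.toENNReal_le.mpr hlt.le
    have hterm : ∀ j ∈ Finset.Icc 1 N,
        ENNReal.ofReal (x 1 * ((2*N:ℕ):ℝ) ^ (-α)) ≤ μ (C j) := by
      intro j hj
      rw [Finset.mem_Icc] at hj
      rw [hC]
      simp only
      rw [hcylN N j hj.1, hPval (j+N) (by omega)]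
      apply ENNReal.ofReal_le_ofReal
      apply mul_le_mul_of_nonneg_left _ hx1pos.le
      apply Real.rpow_le_rpow_of_nonpos
      · exact_mod_cast Nat.pos_of_ne_zero (by omega)
      · exact_mod_cast (by omega : j + N ≤ 2*N)
      · linarith
    have hdisj : (↑(Finset.Icc 1 N) : Set ℕ).PairwiseDisjoint C := by
      intro j _ j' _ hjj'
      apply Set.disjoint_left.mpr
      intro ω hωj hωj'
      have e1 : ω ((0:ℕ):ℤ) = j + 0 := hωj 0 (by omega)
      have e2 : ω ((0:ℕ):ℤ) = j' + 0 := hωj' 0 (by omega)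
      omega
    have hmuS : (N:ℝ≥0∞) * ENNReal.ofReal (x 1 * ((2*N:ℕ):ℝ) ^ (-α)) ≤ μ S := by
      rw [hS, measure_biUnion_finset hdisj (fun j _ => hCmeas N j)]
      calc (N:ℝ≥0∞) * ENNReal.ofReal (x 1 * ((2*N:ℕ):ℝ) ^ (-α))
          = (Finset.Icc 1 N).card • ENNReal.ofReal (x 1 * ((2*N:ℕ):ℝ) ^ (-α)) := by
            rw [nsmul_eq_mul, Nat.card_Icc]
            norm_num
        _ ≤ ∑ j ∈ Finset.Icc 1 N, μ (C j) := Finset.card_nsmul_le_sum _ _ _ hterm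
    have hreal : (N:ℝ) * ((N:ℝ) * (x 1 * ((2*N:ℕ):ℝ) ^ (-α))) =
        x 1 * 2 ^ (-α) * (N:ℝ) ^ ((2:ℝ)-α) := by
      have e1 : ((2*N:ℕ):ℝ) = 2 * (N:ℝ) := by push_cast; ring
      rw [e1, Real.mul_rpow (by norm_num) hNpos.le]
      rw [show ((2:ℝ)-α) = 2 + (-α) by ring, Real.rpow_add hNpos,
        show ((2:ℝ) = ((2:ℕ):ℝ)) by norm_num, Real.rpow_natCast]
      ring
    have hENN : (N:ℝ≥0∞) * ((N:ℝ≥0∞) * ENNReal.ofReal (x 1 * ((2*N:ℕ):ℝ) ^ (-α))) =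
        ENNReal.ofReal (x 1 * 2 ^ (-α) * (N:ℝ) ^ ((2:ℝ)-α)) := by
      rw [← hreal, ENNReal.ofReal_mul hNpos.le, ENNReal.ofReal_mul hNpos.le,
        ENNReal.ofReal_natCast]
    calc ENNReal.ofReal (x 1 * 2 ^ (-α) * (N:ℝ) ^ ((2:ℝ)-α))
        = (N:ℝ≥0∞) * ((N:ℝ≥0∞) * ENNReal.ofReal (x 1 * ((2*N:ℕ):ℝ) ^ (-α))) := hENN.symm
      _ ≤ (N:ℝ≥0∞) * μ S := mul_le_mul_right hmuS _
      _ = ∫⁻ _ω in S, (N:ℝ≥0∞) ∂μ := (setLIntegral_const S _).symm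
      _ ≤ ∫⁻ ω in S, ((tauE shift U ω : ℝ≥0∞)) ∂μ := setLIntegral_mono htaumeas htauS
      _ ≤ ∫⁻ ω, ((tauE shift U ω : ℝ≥0∞)) ∂μ := setLIntegral_le_lintegral _ _
  -- conclude divergence
  have h2α : (0:ℝ) < 2 - α := by linarith
  have hc : (0:ℝ) < x 1 * 2 ^ (-α) := by positivity
  have ht : Filter.Tendsto (fun N : ℕ => x 1 * 2 ^ (-α) * (N:ℝ) ^ ((2:ℝ)-α))
      Filter.atTop Filter.atTop :=
    Filter.Tendsto.const_mul_atTop hc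
      ((tendsto_rpow_atTop h2α).comp tendsto_natCast_atTop_atTop)
  have ht2 : Filter.Tendsto
      (fun N : ℕ => ENNReal.ofReal (x 1 * 2 ^ (-α) * (N:ℝ) ^ ((2:ℝ)-α)))
      Filter.atTop (nhds ⊤) := ENNReal.tendsto_ofReal_atTop.comp ht
  have hfin : (⊤:ℝ≥0∞) ≤ ∫⁻ ω, ((tauE shift U ω : ℝ≥0∞)) ∂μ :=
    le_of_tendsto ht2 (Filter.eventually_atTop.mpr ⟨1, fun N hN => hbound N hN⟩)
  exact top_unique hfin
end
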